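/- Suppose M_r ∈ ℝ^{ρ_r×p} satisfies (1−δ)‖z‖₂² ≤ (p/ρ_r)‖M_r z‖₂² ≤ (1+δ)‖z‖₂² for all z ∈ span(P_{k_r}), with δ ∈ (0,1), and assume λ_{k_r+1} > 0. Let Ū ∈ ℝ^{p×k} have all columns in span(P_{k_r}) and set Ũ = M_r Ū. Let U° be a minimizer of tr(U^⊤ L_r U) over all U ∈ ℝ^{p×k} with M_r U = Ũ, and set U* = P_{k_r} P_{k_r}^⊤ U°. Then ‖U* − Ū‖_F ≤ √(2p/(ρ_r(1−δ))) √(λ_{k_r}/λ_{k_r+1}) ‖Ū‖_F. -/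

import Mathlib

open Matrix

/-- Frobenius norm of a real matrix. -/
noncomputable def frobNorm {m n : Type*} [Fintype m] [Fintype n] (A : Matrix m n ℝ) : ℝ :=
  Real.sqrt (∑ i, ∑ j, (A i j) ^ 2)

/-- Euclidean norm of a real vector. -/
noncomputable def vecNorm {n : Type*} [Fintype n] (x : n → ℝ) : ℝ :=
  Real.sqrt (∑ i, (x i) ^ 2)

/-- A row-selection matrix: its rows are distinct standard basis vectors of `ℝ^p`. -/
def IsRowSelection {ρ p : ℕ} (M : Matrix (Fin ρ) (Fin p) ℝ) : Prop :=
  ∃ f : Fin ρ → Fin p, Function.Injective f ∧ ∀ i j, M i j = if j = f i then 1 else 0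

/-- A column-selection matrix: its columns are distinct standard basis vectors of `ℝ^n`. -/
def IsColSelection {n ρ : ℕ} (M : Matrix (Fin n) (Fin ρ) ℝ) : Prop :=
  ∃ f : Fin ρ → Fin n, Function.Injective f ∧ ∀ i j, M i j = if i = f j then 1 else 0

/-- `y` lies in the span of the columns of `P`. -/
def inColSpan {p k : ℕ} (P : Matrix (Fin p) (Fin k) ℝ) (y : Fin p → ℝ) : Prop :=
  ∃ c : Fin k → ℝ, y = P.mulVec c

/-- `Y ∈ LR(P, Q)`: every column of `Y` lies in the column span of `P` and every row of `Y`
lies in the column span of `Q`. -/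
def memLR {p n kr kc : ℕ} (P : Matrix (Fin p) (Fin kr) ℝ) (Q : Matrix (Fin n) (Fin kc) ℝ)
    (Y : Matrix (Fin p) (Fin n) ℝ) : Prop :=
  (∀ j, inColSpan P (fun i => Y i j)) ∧ (∀ i, inColSpan Q (fun j => Y i j))

/-- Graph cumulative coherence `ν = max_i √n ‖Q^⊤ e_i‖₂`. -/
noncomputable def coherence {n k : ℕ} (Q : Matrix (Fin n) (Fin k) ℝ) : ℝ :=
  ⨆ i : Fin n, Real.sqrt n * vecNorm (fun j => Q i j)


private lemma sumsq_eq_trace {m n : ℕ} (A : Matrix (Fin m) (Fin n) ℝ) :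
    ∑ i, ∑ j, A i j ^ 2 = Matrix.trace (Aᵀ * A) := by
  simp only [Matrix.trace, Matrix.diag, Matrix.mul_apply, Matrix.transpose_apply, sq]
  exact Finset.sum_comm

private lemma trace_conj_diag {p n : ℕ} (d : Fin p → ℝ) (A : Matrix (Fin p) (Fin n) ℝ) :
    Matrix.trace (Aᵀ * Matrix.diagonal d * A) = ∑ i, d i * ∑ j, A i j ^ 2 := by
  simp only [Matrix.trace, Matrix.diag, Matrix.mul_apply, Matrix.transpose_apply,
    Matrix.diagonal_apply, ite_mul, zero_mul, mul_ite, mul_zero, Finset.sum_ite_eq,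
    Finset.sum_ite_eq', Finset.mem_univ, if_true]
  rw [Finset.sum_comm]
  refine Finset.sum_congr rfl fun i _ => ?_
  rw [Finset.mul_sum]
  refine Finset.sum_congr rfl fun j _ => ?_
  ring

private lemma sum_castLE {kr p : ℕ} (h : kr ≤ p) (g : Fin p → ℝ) :
    ∑ l : Fin kr, g (Fin.castLE h l) = ∑ i : Fin p, if (i : ℕ) < kr then g i else 0 := by
  rw [← Finset.sum_filter]
  refine Finset.sum_bij' (fun (l : Fin kr) (_ : l ∈ Finset.univ) => Fin.castLE h l)
    (fun (i : Fin p) (hi : i ∈ Finset.univ.filter (fun i : Fin p => (i : ℕ) < kr)) =>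
      (⟨i.1, by simpa using (Finset.mem_filter.mp hi).2⟩ : Fin kr)) ?_ ?_ ?_ ?_ ?_
  all_goals intros; simp_all [Fin.ext_iff]

/-- error bound for the parameter-free approximate (upsampling) decoder:
`U°` minimizes `tr(U^⊤ L_r U)` subject to `M_r U = Ũ` where `Ũ = M_r Ū`, and
`U* = P_{k_r} P_{k_r}^⊤ U°`. The 1-indexed eigenvalues `λ_{k_r}`, `λ_{k_r+1}` of `L_r`
are `ev ⟨k_r−1⟩`, `ev ⟨k_r⟩`. -/
theorem approximate_decoder_noiseless_bound
    (p ρr kr k : ℕ) (hkr0 : 0 < kr) (hkr : kr < p)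
    (Lr : Matrix (Fin p) (Fin p) ℝ) (hLr : Lr.PosSemidef)
    (ev : Fin p → ℝ) (hev : Monotone ev)
    (P : Matrix (Fin p) (Fin p) ℝ) (hPorth : Pᵀ * P = 1)
    (hLrP : Lr * P = P * Matrix.diagonal ev)
    (Pkr : Matrix (Fin p) (Fin kr) ℝ) (hPkr : Pkr = P.submatrix id (Fin.castLE hkr.le))
    (Mr : Matrix (Fin ρr) (Fin p) ℝ) (hMr : IsRowSelection Mr)
    (δ : ℝ) (hδ : δ ∈ Set.Ioo (0 : ℝ) 1)
    (hRIP : ∀ z : Fin p → ℝ, inColSpan Pkr z →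
      (1 - δ) * (vecNorm z) ^ 2 ≤ ((p : ℝ) / ρr) * (vecNorm (Mr.mulVec z)) ^ 2 ∧
      ((p : ℝ) / ρr) * (vecNorm (Mr.mulVec z)) ^ 2 ≤ (1 + δ) * (vecNorm z) ^ 2)
    (hlam1 : 0 < ev ⟨kr, hkr⟩)
    (Ubar : Matrix (Fin p) (Fin k) ℝ) (hUbar : ∀ j, inColSpan Pkr (fun i => Ubar i j))
    (Util : Matrix (Fin ρr) (Fin k) ℝ) (hUtil : Util = Mr * Ubar)
    (Unot : Matrix (Fin p) (Fin k) ℝ) (hfeas : Mr * Unot = Util)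
    (hmin : ∀ U : Matrix (Fin p) (Fin k) ℝ, Mr * U = Util →
      Matrix.trace (Unotᵀ * Lr * Unot) ≤ Matrix.trace (Uᵀ * Lr * U)) :
    frobNorm (Pkr * Pkrᵀ * Unot - Ubar) ≤
      Real.sqrt (2 * p / ((ρr : ℝ) * (1 - δ))) *
        Real.sqrt (ev ⟨kr - 1, by omega⟩ / ev ⟨kr, hkr⟩) * frobNorm Ubar := by

  obtain ⟨hδ0, hδ1⟩ := hδ
  have hδpos : 0 < 1 - δ := by linarith
  subst hPkr
  have hPP : P * Pᵀ = 1 := mul_eq_one_comm.mp hPorth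
  have hPtP : ∀ i j : Fin p, ∑ m, P m i * P m j = if i = j then (1:ℝ) else 0 := by
    intro i j
    have h := congrFun (congrFun hPorth i) j
    simpa [Matrix.mul_apply, Matrix.one_apply, Matrix.transpose_apply] using h
  have hev0 : ∀ c, 0 ≤ ev c := by
    intro c
    have h1 := hLr.dotProduct_mulVec_nonneg (fun a => P a c)
    have h2 : ∀ a, (Lr *ᵥ (fun a => P a c)) a = ev c * P a c := by
      intro a
      have h := congrFun (congrFun hLrP a) c
      simpa [Matrix.mul_apply, Matrix.mulVec, dotProduct, Matrix.diagonal_apply, mul_ite,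
        mul_zero, Finset.sum_ite_eq, Finset.sum_ite_eq', mul_comm] using h
    have h3 : (star (fun a => P a c)) ⬝ᵥ (Lr *ᵥ (fun a => P a c)) = ev c := by
      simp only [star_trivial, dotProduct]
      calc ∑ a, P a c * (Lr *ᵥ (fun a => P a c)) a = ∑ a, ev c * (P a c * P a c) := by
            refine Finset.sum_congr rfl fun a _ => ?_
            rw [h2 a]; ring
        _ = ev c * ∑ a, P a c * P a c := by rw [Finset.mul_sum]
        _ = ev c := by rw [hPtP c c]; simp
    rw [h3] at h1
    exact h1
  set A : Matrix (Fin p) (Fin k) ℝ := Pᵀ * Unot with hA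
  set B : Matrix (Fin p) (Fin k) ℝ := Pᵀ * Ubar with hB
  have hUnot : Unot = P * A := by rw [hA, ← Matrix.mul_assoc, hPP, Matrix.one_mul]
  have hUbarPB : Ubar = P * B := by rw [hB, ← Matrix.mul_assoc, hPP, Matrix.one_mul]
  have hBzero : ∀ (i : Fin p) (j : Fin k), kr ≤ (i:ℕ) → B i j = 0 := by
    intro i j hi
    obtain ⟨c, hc⟩ := hUbar j
    have hUcol : ∀ m, Ubar m j = ∑ l, P m (Fin.castLE hkr.le l) * c l := by
      intro m
      have := congrFun hc m
      simpa [Matrix.mulVec, dotProduct, Matrix.submatrix_apply] using this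
    have hBij : B i j = ∑ m, P m i * Ubar m j := by
      simp [hB, Matrix.mul_apply, Matrix.transpose_apply]
    rw [hBij]
    calc ∑ m, P m i * Ubar m j = ∑ m, ∑ l, c l * (P m i * P m (Fin.castLE hkr.le l)) := by
          refine Finset.sum_congr rfl fun m _ => ?_
          rw [hUcol m, Finset.mul_sum]
          exact Finset.sum_congr rfl fun l _ => by ring
      _ = ∑ l, c l * ∑ m, P m i * P m (Fin.castLE hkr.le l) := by
          rw [Finset.sum_comm]
          exact Finset.sum_congr rfl fun l _ => by rw [Finset.mul_sum]
      _ = 0 := by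
          refine Finset.sum_eq_zero fun l _ => ?_
          rw [hPtP i (Fin.castLE hkr.le l)]
          have hne : i ≠ Fin.castLE hkr.le l := by
            intro e
            have : (i : ℕ) = (l : ℕ) := by simpa [Fin.ext_iff] using e
            omega
          simp [hne]
  set DA : Matrix (Fin p) (Fin k) ℝ :=
    Matrix.of (fun i j => if (i:ℕ) < kr then A i j else 0) with hDA
  set C : Matrix (Fin p) (Fin k) ℝ :=
    Matrix.of (fun i j => if (i:ℕ) < kr then 0 else A i j) with hC
  set Pkr := P.submatrix id (Fin.castLE hkr.le) with hPkr'
  -- U* = P * DA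
  have hUstar : Pkr * Pkrᵀ * Unot = P * DA := by
    have hPkrtU : Pkrᵀ * Unot = Matrix.of (fun (l : Fin kr) j => A (Fin.castLE hkr.le l) j) := by
      ext l j
      have : A (Fin.castLE hkr.le l) j = ∑ m, P m (Fin.castLE hkr.le l) * Unot m j := by
        simp [hA, Matrix.mul_apply, Matrix.transpose_apply]
      simp only [Matrix.mul_apply, Matrix.transpose_apply, hPkr', Matrix.submatrix_apply,
        id_eq, Matrix.of_apply]
      rw [this]
    rw [Matrix.mul_assoc, hPkrtU]
    ext a j
    simp only [Matrix.mul_apply, hPkr', Matrix.submatrix_apply, id_eq, Matrix.of_apply]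
    rw [sum_castLE hkr.le (fun i => P a i * A i j)]
    exact Finset.sum_congr rfl fun i _ => by by_cases h : (i:ℕ) < kr <;> simp [hDA, h]
  have hnsqP : ∀ (X : Matrix (Fin p) (Fin k) ℝ),
      ∑ i, ∑ j, (P * X) i j ^ 2 = ∑ i, ∑ j, X i j ^ 2 := by
    intro X
    rw [sumsq_eq_trace, sumsq_eq_trace, Matrix.transpose_mul, Matrix.mul_assoc,
      ← Matrix.mul_assoc Pᵀ P X, hPorth, Matrix.one_mul]
  have htr : ∀ (X Y : Matrix (Fin p) (Fin k) ℝ), X = P * Y →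
      Matrix.trace (Xᵀ * Lr * X) = ∑ i, ev i * ∑ j, Y i j ^ 2 := by
    intro X Y hXY
    have hPLP : Pᵀ * Lr * P = Matrix.diagonal ev := by
      rw [Matrix.mul_assoc, hLrP, ← Matrix.mul_assoc, hPorth, Matrix.one_mul]
    have h1 : Xᵀ * Lr * X = Yᵀ * Matrix.diagonal ev * Y := by
      rw [hXY, ← hPLP]
      simp only [Matrix.transpose_mul, Matrix.mul_assoc]
    rw [h1, trace_conj_diag]
  -- minimality chain
  have hchain : ∑ i, ev i * ∑ j, A i j ^ 2 ≤ ∑ i, ev i * ∑ j, B i j ^ 2 := by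
    calc ∑ i, ev i * ∑ j, A i j ^ 2 = Matrix.trace (Unotᵀ * Lr * Unot) :=
          (htr _ _ hUnot).symm
      _ ≤ Matrix.trace (Ubarᵀ * Lr * Ubar) := hmin Ubar hUtil.symm
      _ = ∑ i, ev i * ∑ j, B i j ^ 2 := htr _ _ hUbarPB
  set lam := ev ⟨kr - 1, by omega⟩ with hlamdef
  set mu := ev ⟨kr, hkr⟩ with hmudef
  have hlam0 : 0 ≤ lam := hev0 _
  -- mu * nsq C ≤ lam * nsq B
  have hmuC : mu * (∑ i, ∑ j, C i j ^ 2) ≤ lam * (∑ i, ∑ j, B i j ^ 2) := by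
    have h1 : mu * (∑ i, ∑ j, C i j ^ 2) ≤ ∑ i, ev i * ∑ j, A i j ^ 2 := by
      rw [Finset.mul_sum]
      refine Finset.sum_le_sum fun i _ => ?_
      by_cases h : (i:ℕ) < kr
      · have hz : ∑ j, C i j ^ 2 = 0 := by
          refine Finset.sum_eq_zero fun j _ => by simp [hC, h]
        rw [hz, mul_zero]
        exact mul_nonneg (hev0 i) (Finset.sum_nonneg fun j _ => sq_nonneg _)
      · have hz : ∑ j, C i j ^ 2 = ∑ j, A i j ^ 2 := by
          refine Finset.sum_congr rfl fun j _ => by simp [hC, h]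
        rw [hz]
        refine mul_le_mul_of_nonneg_right ?_ (Finset.sum_nonneg fun j _ => sq_nonneg _)
        exact hev ((Fin.le_def).mpr (by simpa using Nat.le_of_not_lt h))
    have h2 : ∑ i, ev i * ∑ j, B i j ^ 2 ≤ lam * (∑ i, ∑ j, B i j ^ 2) := by
      rw [Finset.mul_sum]
      refine Finset.sum_le_sum fun i _ => ?_
      by_cases h : (i:ℕ) < kr
      · refine mul_le_mul_of_nonneg_right ?_ (Finset.sum_nonneg fun j _ => sq_nonneg _)
        exact hev ((Fin.le_def).mpr (by simp; omega))
      · have hz : ∑ j, B i j ^ 2 = 0 := by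
          refine Finset.sum_eq_zero fun j _ => ?_
          rw [hBzero i j (Nat.le_of_not_lt h)]; ring
        rw [hz, mul_zero, mul_zero]
    linarith
  -- W and its properties
  set W : Matrix (Fin p) (Fin k) ℝ := Pkr * Pkrᵀ * Unot - Ubar with hW
  have hWPD : W = P * (DA - B) := by
    rw [hW, hUstar, hUbarPB, Matrix.mul_sub]
  have hDABzero : ∀ (i : Fin p) j, kr ≤ (i:ℕ) → (DA - B) i j = 0 := by
    intro i j hi
    have h1 : DA i j = 0 := by simp [hDA, Nat.not_lt.mpr hi]
    have h2 : B i j = 0 := hBzero i j hi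
    simp [Matrix.sub_apply, h1, h2]
  have hWcol : ∀ j, inColSpan Pkr (fun i => W i j) := by
    intro j
    refine ⟨fun l => (DA - B) (Fin.castLE hkr.le l) j, ?_⟩
    funext a
    have : W a j = ∑ i, P a i * (DA - B) i j := by
      rw [hWPD]; simp [Matrix.mul_apply]
    rw [this]
    simp only [Matrix.mulVec, dotProduct, Matrix.submatrix_apply, id_eq]
    rw [show (∑ i, P a i * (DA - B) i j) =
        ∑ i : Fin p, if (i:ℕ) < kr then P a i * (DA - B) i j else 0 from
      Finset.sum_congr rfl fun i _ => by
        by_cases h : (i:ℕ) < kr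
        · simp [h]
        · simp [h, hDABzero i j (Nat.le_of_not_lt h)]]
    rw [← sum_castLE hkr.le (fun i => P a i * (DA - B) i j)]
    simp [hPkr']
  have hvec : ∀ {q : ℕ} (z : Fin q → ℝ), (vecNorm z) ^ 2 = ∑ i, z i ^ 2 := by
    intro q z
    exact Real.sq_sqrt (Finset.sum_nonneg fun i _ => sq_nonneg _)
  -- ρr positive
  have hρ : 0 < (ρr : ℝ) := by
    by_contra hcon
    have hρ0 : (ρr : ℝ) = 0 := le_antisymm (le_of_not_gt hcon) (Nat.cast_nonneg _)
    set z : Fin p → ℝ := fun a => P a (Fin.castLE hkr.le ⟨0, hkr0⟩) with hz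
    have hspan : inColSpan Pkr z := by
      refine ⟨fun l => if l = ⟨0, hkr0⟩ then 1 else 0, ?_⟩
      funext a
      simp [hz, hPkr', Matrix.mulVec, dotProduct, Matrix.submatrix_apply, mul_ite, mul_one,
        mul_zero, Finset.sum_ite_eq, Finset.sum_ite_eq', Fin.castLE]
    have h1 := (hRIP z hspan).1
    rw [hvec z] at h1
    have hzn : ∑ i, z i ^ 2 = 1 := by
      have := hPtP (Fin.castLE hkr.le ⟨0, hkr0⟩) (Fin.castLE hkr.le ⟨0, hkr0⟩)
      simp only [if_pos rfl] at this
      calc ∑ i, z i ^ 2 = ∑ i, P i (Fin.castLE hkr.le ⟨0, hkr0⟩) * P i (Fin.castLE hkr.le ⟨0, hkr0⟩) :=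
            Finset.sum_congr rfl fun i _ => by rw [hz]; ring
        _ = 1 := this
    rw [hzn, mul_one, hρ0, div_zero, zero_mul] at h1
    linarith
  -- RIP aggregated over columns
  have hRIPagg : (1 - δ) * (∑ j, ∑ i, W i j ^ 2) ≤
      ((p:ℝ) / ρr) * (∑ j, ∑ i, (Mr * W) i j ^ 2) := by
    rw [Finset.mul_sum, Finset.mul_sum]
    refine Finset.sum_le_sum fun j _ => ?_
    have h := (hRIP (fun i => W i j) (hWcol j)).1
    rw [hvec, hvec] at h
    have hmv : ∀ i, (Mr.mulVec (fun a => W a j)) i = (Mr * W) i j := by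
      intro i; simp [Matrix.mulVec, dotProduct, Matrix.mul_apply]
    calc (1 - δ) * ∑ i, W i j ^ 2 ≤ ((p:ℝ)/ρr) * ∑ i, (Mr.mulVec fun a => W a j) i ^ 2 := h
      _ = ((p:ℝ)/ρr) * ∑ i, (Mr * W) i j ^ 2 := by simp only [hmv]
  -- Mr * W = -(Mr * (P * C))
  have hACDA : A - DA = C := by
    ext i j
    by_cases h : (i:ℕ) < kr <;> simp [hDA, hC, h]
  have hUnotUstar : Unot - Pkr * Pkrᵀ * Unot = P * C := by
    rw [hUstar, hUnot, ← Matrix.mul_sub, hACDA]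
  have hMrW : Mr * W = -(Mr * (P * C)) := by
    rw [hW, ← hUnotUstar]
    have h1 : Mr * Unot = Mr * Ubar := by rw [hfeas, hUtil]
    rw [Matrix.mul_sub, Matrix.mul_sub, h1]
    abel
  -- row selection norm bound
  have hMrnsq : ∑ j, ∑ i, (Mr * (P * C)) i j ^ 2 ≤ ∑ i, ∑ j, C i j ^ 2 := by
    obtain ⟨fsel, hf, hMf⟩ := hMr
    have hentry : ∀ i j, (Mr * (P * C)) i j = (P * C) (fsel i) j := by
      intro i j
      simp [Matrix.mul_apply, hMf, ite_mul, one_mul, zero_mul, Finset.sum_ite_eq,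
        Finset.sum_ite_eq']
    have step1 : ∑ j, ∑ i, (Mr * (P * C)) i j ^ 2 = ∑ i, ∑ j, (P * C) (fsel i) j ^ 2 := by
      rw [Finset.sum_comm]
      exact Finset.sum_congr rfl fun i _ =>
        Finset.sum_congr rfl fun j _ => by rw [hentry i j]
    rw [step1]
    have step2 : ∑ i : Fin ρr, ∑ j, (P * C) (fsel i) j ^ 2 ≤ ∑ a, ∑ j, (P * C) a j ^ 2 := by
      have himg := Finset.sum_image (f := fun a => ∑ j, (P * C) a j ^ 2)
        (g := fsel) (s := Finset.univ) (fun x _ y _ h => hf h)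
      rw [← himg]
      exact Finset.sum_le_sum_of_subset_of_nonneg (Finset.subset_univ _)
        (fun a _ _ => Finset.sum_nonneg fun j _ => sq_nonneg _)
    calc ∑ i : Fin ρr, ∑ j, (P * C) (fsel i) j ^ 2 ≤ ∑ a, ∑ j, (P * C) a j ^ 2 := step2
      _ = ∑ i, ∑ j, C i j ^ 2 := hnsqP C
  -- put the pieces together
  set nB := ∑ i, ∑ j, B i j ^ 2 with hnB
  set nC := ∑ i, ∑ j, C i j ^ 2 with hnC
  set S := ∑ i, ∑ j, W i j ^ 2 with hS
  have hnB0 : 0 ≤ nB := Finset.sum_nonneg fun i _ => Finset.sum_nonneg fun j _ => sq_nonneg _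
  have hnC0 : 0 ≤ nC := Finset.sum_nonneg fun i _ => Finset.sum_nonneg fun j _ => sq_nonneg _
  have hS0 : 0 ≤ S := Finset.sum_nonneg fun i _ => Finset.sum_nonneg fun j _ => sq_nonneg _
  have hMWeq : ∑ j, ∑ i, (Mr * W) i j ^ 2 ≤ nC := by
    calc ∑ j, ∑ i, (Mr * W) i j ^ 2 = ∑ j, ∑ i, (Mr * (P * C)) i j ^ 2 := by
          refine Finset.sum_congr rfl fun j _ => Finset.sum_congr rfl fun i _ => ?_
          rw [hMrW]; simp [Matrix.neg_apply]
      _ ≤ nC := hMrnsq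
  have hSW : ∑ j, ∑ i, W i j ^ 2 = S := Finset.sum_comm
  have hkey : (1 - δ) * S ≤ ((p:ℝ)/ρr) * nC := by
    calc (1 - δ) * S = (1 - δ) * (∑ j, ∑ i, W i j ^ 2) := by rw [hSW]
      _ ≤ ((p:ℝ)/ρr) * (∑ j, ∑ i, (Mr * W) i j ^ 2) := hRIPagg
      _ ≤ ((p:ℝ)/ρr) * nC := by
          refine mul_le_mul_of_nonneg_left hMWeq ?_
          positivity
  have hUbarnsq : ∑ i, ∑ j, Ubar i j ^ 2 = nB := by
    rw [hUbarPB]; exact hnsqP B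
  -- final numeric bound
  have hCle : nC ≤ (lam / mu) * nB := by
    rw [div_mul_eq_mul_div, le_div_iff₀ hlam1]
    calc nC * mu = mu * nC := by ring
      _ ≤ lam * nB := hmuC
  have hSle : S ≤ ((p:ℝ) / ((ρr:ℝ) * (1 - δ))) * ((lam / mu) * nB) := by
    rw [div_mul_eq_mul_div, le_div_iff₀ (mul_pos hρ hδpos)]
    calc S * ((ρr:ℝ) * (1 - δ)) = ((1 - δ) * S) * ρr := by ring
      _ ≤ (((p:ℝ)/ρr) * nC) * ρr := mul_le_mul_of_nonneg_right hkey (le_of_lt hρ)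
      _ = (p:ℝ) * nC := by field_simp
      _ ≤ (p:ℝ) * ((lam / mu) * nB) := mul_le_mul_of_nonneg_left hCle (Nat.cast_nonneg _)
  have hratio0 : 0 ≤ lam / mu := div_nonneg hlam0 hlam1.le
  have hS2 : S ≤ (2 * (p:ℝ) / ((ρr:ℝ) * (1 - δ))) * ((lam / mu) * nB) := by
    refine le_trans hSle ?_
    refine mul_le_mul_of_nonneg_right ?_ (mul_nonneg hratio0 hnB0)
    rw [div_le_div_iff₀ (mul_pos hρ hδpos) (mul_pos hρ hδpos)]
    have hx : 0 ≤ (p:ℝ) * ((ρr:ℝ) * (1 - δ)) :=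
      mul_nonneg (Nat.cast_nonneg _) (le_of_lt (mul_pos hρ hδpos))
    linarith only [hx]
  -- conclude with square roots
  have hfrobW : frobNorm W = Real.sqrt S := by unfold frobNorm; rw [← hS]
  have hfrobU : frobNorm Ubar = Real.sqrt nB := by
    unfold frobNorm; rw [hUbarnsq]
  rw [hfrobW, hfrobU]
  have hR0 : (0:ℝ) ≤ 2 * (p:ℝ) / ((ρr:ℝ) * (1 - δ)) := by positivity
  have hgoal := Real.sqrt_le_sqrt hS2
  rw [Real.sqrt_mul hR0, Real.sqrt_mul hratio0, ← mul_assoc] at hgoal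
  exact hgoal
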